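/- For every v ∈ 𝔡_ξ and every integer M ≥ 1, one has A*_v(M) = A_{d(v)}(M). -/

import Mathlib

open scoped BigOperators

noncomputable section

attribute [local instance 10] Classical.propDecidable

/-- The `q`-integer `[n] = (1 - q^n)/(1 - q)`. -/
def qint (q : ℝ) (n : ℕ) : ℝ := (1 - q ^ n) / (1 - q)

/-- `I(r,n)`: multi-indices of positive integers of depth `r` and weight `n`. -/
def Ifin (r n : ℕ) : Finset (Fin r → ℕ) :=
  (Fintype.piFinset fun _ : Fin r => Finset.Icc 1 n).filter fun c => (∑ i, c i) = n

/-- `I₀(r,n)`: admissible multi-indices (first entry at least 2). -/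
def I0fin (r n : ℕ) : Finset (Fin r → ℕ) :=
  (Ifin r n).filter fun c => ∀ h : 0 < r, 2 ≤ c ⟨0, h⟩

/-- The `q`-analogue of the multiple zeta value,
`ζ_q(α) = Σ_{m_1 > ... > m_r > 0} Π_j q^{(α_j - 1) m_j}/[m_j]^{α_j}`. -/
def zetaQ (q : ℝ) {r : ℕ} (α : Fin r → ℕ) : ℝ :=
  ∑' m : {m : Fin r → ℕ // (∀ i j : Fin r, i < j → m j < m i) ∧ ∀ i, 0 < m i},
    ∏ j, q ^ ((α j - 1) * m.1 j) / qint q (m.1 j) ^ α j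

/-- `K_{b,n}(M) = Σ_{α ∈ I₀(b,n)} Σ_{m_1 > ... > m_{b-1} > m_b = M} Π_j q^{(α_j-1)m_j}/[m_j]^{α_j}`. -/
def Kfun (q : ℝ) (b n M : ℕ) : ℝ :=
  ∑ α ∈ I0fin b n,
    ∑' m : {m : Fin b → ℕ //
        (∀ i j : Fin b, i < j → m j < m i) ∧
          ∀ h : 0 < b, m ⟨b - 1, Nat.sub_lt h Nat.one_pos⟩ = M},
      ∏ j, q ^ ((α j - 1) * m.1 j) / qint q (m.1 j) ^ α j

/-- `f_ℓ(N,M) = Σ_{N = k_1 > k_2 > ... > k_ℓ > M} (q^{k_1-M}/[k_1-M]) Π_{j=2}^{ℓ} 1/[k_j-M]`. -/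
def fS (q : ℝ) (l N M : ℕ) : ℝ :=
  ∑ k ∈ (Fintype.piFinset fun _ : Fin l => Finset.Ioc M N).filter
      (fun k => (∀ i j : Fin l, i < j → k j < k i) ∧ ∀ h : 0 < l, k ⟨0, h⟩ = N),
    ∏ j : Fin l, (if (j : ℕ) = 0 then q ^ (k j - M) else 1) / qint q (k j - M)

/-- `g_{ℓ,β}(M) = Σ_{M = m_1 ≥ m_2 ≥ ... ≥ m_ℓ ≥ 1} (q^{(β-1)m_1}/[m_1]^β) Π_{j=2}^{ℓ} q^{m_j}/[m_j]`. -/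
def gS (q : ℝ) (l β M : ℕ) : ℝ :=
  ∑ m ∈ (Fintype.piFinset fun _ : Fin l => Finset.Icc 1 M).filter
      (fun m => (∀ i j : Fin l, i ≤ j → m j ≤ m i) ∧ ∀ h : 0 < l, m ⟨0, h⟩ = M),
    ∏ j : Fin l, if (j : ℕ) = 0 then q ^ ((β - 1) * m j) / qint q (m j) ^ β
      else q ^ m j / qint q (m j)

/-- `h_{r,ℓ}(N_1,...,N_r,M) = Σ_{c ∈ I(r,ℓ)} (Π_{j=1}^{r-1} f_{c_j}(N_j,N_{j+1})) f_{c_r}(N_r,M)`. -/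
def hS (q : ℝ) (r l : ℕ) (N : Fin r → ℕ) (M : ℕ) : ℝ :=
  ∑ c ∈ Ifin r l,
    ∏ j : Fin r, fS q (c j) (N j) (if h : (j : ℕ) + 1 < r then N ⟨(j : ℕ) + 1, h⟩ else M)

/-- `p(n_1,...,n_s;m) = (q^{n_1-m}/[n_1-m]) Π_{j=2}^{s} 1/[n_j-m]`, with `p(∅;m) = 1`. -/
def pS (q : ℝ) {s : ℕ} (n : Fin s → ℕ) (m : ℕ) : ℝ :=
  ∏ j : Fin s, (if (j : ℕ) = 0 then q ^ (n j - m) else 1) / qint q (n j - m)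

/-! ### The algebras 𝔡, 𝔡_ξ and 𝔡₁ -/

/-- The alphabet `S = {z_k}_{k ≥ 1} ∪ {ξ_k}_{k ≥ 1}`: `Sum.inl k = z_k`, `Sum.inr k = ξ_k`. -/
abbrev Letter : Type := ℕ+ ⊕ ℕ+

/-- The noncommutative polynomial algebra 𝔡 over ℤ freely generated by `S`. -/
abbrev Dfree : Type := MonoidAlgebra ℤ (FreeMonoid Letter)

/-- The subalgebra 𝔡_ξ generated by the `ξ_k`, realized as a free algebra on `{ξ_k}_{k≥1}`. -/
abbrev DXi : Type := MonoidAlgebra ℤ (FreeMonoid ℕ+)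

/-- The subalgebra 𝔡₁ generated by `z_1` and `ξ_1`, realized as a free algebra on two letters
(`false = z_1`, `true = ξ_1`). -/
abbrev DOne : Type := MonoidAlgebra ℤ (FreeMonoid Bool)

/-- The generator `z_k` of 𝔡. -/
def zL (k : ℕ+) : Dfree := MonoidAlgebra.single (FreeMonoid.of (Sum.inl k)) 1

/-- The generator `ξ_k` of 𝔡. -/
def xiL (k : ℕ+) : Dfree := MonoidAlgebra.single (FreeMonoid.of (Sum.inr k)) 1

/-- The generator `ξ_k` of 𝔡_ξ. -/
def xiX (k : ℕ+) : DXi := MonoidAlgebra.single (FreeMonoid.of k) 1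

/-- The generator `z_1` of 𝔡₁. -/
def zO : DOne := MonoidAlgebra.single (FreeMonoid.of false) 1

/-- The generator `ξ_1` of 𝔡₁. -/
def xiO : DOne := MonoidAlgebra.single (FreeMonoid.of true) 1

/-- `z_k` for a natural number index `k ≥ 1` (junk value `0` for `k = 0`). -/
def zOf (k : ℕ) : Dfree := if h : 0 < k then zL ⟨k, h⟩ else 0

/-- `ξ_k ∈ 𝔡_ξ` for a natural number index `k ≥ 1` (junk value `0` for `k = 0`). -/
def xiOf (k : ℕ) : DXi := if h : 0 < k then xiX ⟨k, h⟩ else 0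

/-- The canonical embedding `𝔡_ξ ↪ 𝔡`. -/
def toD (v : DXi) : Dfree := MonoidAlgebra.ofCoeff (Finsupp.mapDomain (FreeMonoid.map Sum.inr) v.coeff)

/-- The canonical embedding `𝔡₁ ↪ 𝔡` (`false ↦ z_1`, `true ↦ ξ_1`). -/
def toD1 (w : DOne) : Dfree :=
  MonoidAlgebra.ofCoeff (Finsupp.mapDomain (FreeMonoid.map fun b => if b then Sum.inr 1 else Sum.inl 1) w.coeff)

/-- `J_{z_k}(m) = q^{(k-1)m}/[m]^k` and `J_{ξ_k}(m) = q^{km}/[m]^k`. -/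
def Jlet (q : ℝ) : Letter → ℕ → ℝ
  | Sum.inl k, m => q ^ (((k : ℕ) - 1) * m) / qint q m ^ (k : ℕ)
  | Sum.inr k, m => q ^ ((k : ℕ) * m) / qint q m ^ (k : ℕ)

/-- `A_w(M) = Σ_{M > m_1 > ... > m_r > 0} J_{u_1}(m_1) ⋯ J_{u_r}(m_r)` for a word `w = u_1 ⋯ u_r`. -/
def AW (q : ℝ) (w : List Letter) (M : ℕ) : ℝ :=
  ∑ m ∈ (Fintype.piFinset fun _ : Fin w.length => Finset.Ioo 0 M).filter
      (fun m => ∀ i j, i < j → m j < m i),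
    ∏ j, Jlet q (w.get j) (m j)

/-- `A*_w(M) = Σ_{M > m_1 ≥ ... ≥ m_r ≥ 1} J_{u_1}(m_1) ⋯ J_{u_r}(m_r)` for a word `w = u_1 ⋯ u_r`. -/
def AstarW (q : ℝ) (w : List Letter) (M : ℕ) : ℝ :=
  ∑ m ∈ (Fintype.piFinset fun _ : Fin w.length => Finset.Ioo 0 M).filter
      (fun m => ∀ i j, i ≤ j → m j ≤ m i),
    ∏ j, Jlet q (w.get j) (m j)

/-- The ℤ-linear extension `A(M) : 𝔡 → ℝ`. -/
def Amap (q : ℝ) (x : Dfree) (M : ℕ) : ℝ :=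
  Finsupp.sum x.coeff fun w a => (a : ℝ) * AW q (FreeMonoid.toList w) M

/-- The ℤ-linear extension `A*(M) : 𝔡 → ℝ`. -/
def Astarmap (q : ℝ) (x : Dfree) (M : ℕ) : ℝ :=
  Finsupp.sum x.coeff fun w a => (a : ℝ) * AstarW q (FreeMonoid.toList w) M

/-- The map `ρ` on words:  `ρ(1,w) = w`, `ρ(v,1) = v`,
`ρ(ξ_k v, z_ℓ w) = ξ_k ρ(v, z_ℓ w) + z_ℓ ρ(ξ_k v, w) + z_{k+ℓ} ρ(v,w)`, and
`ρ(ξ_k v, ξ_ℓ w) = ξ_k ρ(v, ξ_ℓ w) + ξ_ℓ ρ(ξ_k v, w) + ξ_{k+ℓ} ρ(v,w)`. -/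
def rhoW : List ℕ+ → List Letter → Dfree
  | [], w => MonoidAlgebra.single (FreeMonoid.ofList w) 1
  | k :: v, [] => MonoidAlgebra.single (FreeMonoid.ofList ((k :: v).map Sum.inr)) 1
  | k :: v, Sum.inl l :: w =>
      xiL k * rhoW v (Sum.inl l :: w) + zL l * rhoW (k :: v) w + zL (k + l) * rhoW v w
  | k :: v, Sum.inr l :: w =>
      xiL k * rhoW v (Sum.inr l :: w) + xiL l * rhoW (k :: v) w + xiL (k + l) * rhoW v w
  termination_by v w => v.length + w.length

/-- The ℤ-bilinear map `ρ : 𝔡_ξ × 𝔡 → 𝔡`. -/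
def rho (v : DXi) (x : Dfree) : Dfree :=
  Finsupp.sum v.coeff fun vw a =>
    Finsupp.sum x.coeff fun xw b => (a * b) • rhoW (FreeMonoid.toList vw) (FreeMonoid.toList xw)

/-- `ξ_k ∘ ·` on words: `ξ_k ∘ 1 = 0` and `ξ_k ∘ (ξ_ℓ v) = ξ_{k+ℓ} v`. -/
def circW (k : ℕ+) : List ℕ+ → DXi
  | [] => 0
  | l :: v => MonoidAlgebra.single (FreeMonoid.ofList ((k + l) :: v)) 1

/-- The ℤ-linear map `ξ_k ∘ · : 𝔡_ξ → 𝔡_ξ`. -/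
def circ (k : ℕ+) (x : DXi) : DXi :=
  Finsupp.sum x.coeff fun w a => a • circW k (FreeMonoid.toList w)

/-- The map `d` on words: `d(1) = 1` and `d(ξ_k v) = ξ_k d(v) + ξ_k ∘ d(v)`. -/
def dW : List ℕ+ → DXi
  | [] => 1
  | k :: v => xiX k * dW v + circ k (dW v)

/-- The ℤ-linear map `d : 𝔡_ξ → 𝔡_ξ`. -/
def dmap (v : DXi) : DXi := Finsupp.sum v.coeff fun w a => a • dW (FreeMonoid.toList w)

/-- The maps `φ_s` on words of 𝔡₁: `φ_0 = id`, `φ_s(1) = ξ_1 z_1^{s-1}` for `s ≥ 1`,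
`φ_s(z_1 w) = z_1 φ_s(w) + ξ_1 Σ_{i=1}^{s} z_1^i φ_{s-i}(w)`, and
`φ_s(ξ_1 w) = ξ_1 Σ_{i=0}^{s} z_1^i φ_{s-i}(w)`. -/
def phiW : ℕ → List Bool → DOne
  | s, [] =>
      if s = 0 then 1
      else MonoidAlgebra.single (FreeMonoid.ofList (true :: List.replicate (s - 1) false)) 1
  | s, false :: w =>
      zO * phiW s w +
        ∑ i ∈ Finset.Icc 1 s, xiO * zO ^ i * phiW (s - i) w
  | s, true :: w =>
      ∑ i ∈ Finset.range (s + 1), xiO * zO ^ i * phiW (s - i) w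
  termination_by _ w => w.length

/-- The ℤ-linear maps `φ_s : 𝔡₁ → 𝔡₁`. -/
def phi (s : ℕ) (x : DOne) : DOne := Finsupp.sum x.coeff fun w a => a • phiW s (FreeMonoid.toList w)

/-- `Φ_0 = id` and `Φ_ℓ = Σ_{r=1}^{ℓ} (-1)^r Σ_{c ∈ I(r,ℓ)} φ_{c_1} ⋯ φ_{c_r}` for `ℓ ≥ 1`. -/
def PhiM : ℕ → DOne → DOne
  | 0 => id
  | l + 1 => fun x =>
      ∑ r ∈ Finset.Icc 1 (l + 1),
        (-1 : ℤ) ^ r •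
          ∑ c ∈ Ifin r (l + 1), ((List.ofFn fun j : Fin r => phi (c j)).foldr (· ∘ ·) id) x

/-- `Z_s(w) = Σ_{ℓ=0}^{s} ρ(d(ξ_1^{s-ℓ}), Φ_ℓ(w))`. -/
def Zmap (s : ℕ) (w : DOne) : Dfree :=
  ∑ l ∈ Finset.range (s + 1), rho (dmap (xiX 1 ^ (s - l))) (toD1 (PhiM l w))
/-! ### Auxiliary material for the proof -/

section AstarProof

lemma qint_zero' (q : ℝ) : qint q 0 = 0 := by simp [qint]

lemma Jlet_zero' (q : ℝ) (u : Letter) : Jlet q u 0 = 0 := by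
  cases u with
  | inl k => simp [Jlet, qint_zero', zero_pow k.pos.ne', div_zero]
  | inr k => simp [Jlet, qint_zero', zero_pow k.pos.ne', div_zero]

lemma Jlet_mul' (q : ℝ) (k l : ℕ+) (m : ℕ) :
    Jlet q (Sum.inr k) m * Jlet q (Sum.inr l) m = Jlet q (Sum.inr (k + l)) m := by
  simp only [Jlet, PNat.add_coe]
  rw [div_mul_div_comm, ← pow_add, ← pow_add, add_mul]

lemma sum_pi_succ' {n : ℕ} (T : Finset ℕ) (g : (Fin (n + 1) → ℕ) → ℝ) :
    ∑ s ∈ Fintype.piFinset (fun _ : Fin (n + 1) => T), g s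
      = ∑ p ∈ T ×ˢ Fintype.piFinset (fun _ : Fin n => T), g (Fin.cons p.1 p.2) := by
  refine Finset.sum_bij' (fun s _ => (s 0, Fin.tail s)) (fun p _ => Fin.cons p.1 p.2) ?_ ?_ ?_ ?_ ?_
  · intro s hs
    simp only [Fintype.mem_piFinset] at hs
    simp only [Finset.mem_product, Fintype.mem_piFinset]
    exact ⟨hs 0, fun i => hs i.succ⟩
  · intro p hp
    simp only [Finset.mem_product, Fintype.mem_piFinset] at hp
    simp only [Fintype.mem_piFinset]
    intro i
    induction i using Fin.cases with
    | zero => simpa using hp.1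
    | succ i => simpa using hp.2 i
  · intro s _; exact Fin.cons_self_tail s
  · intro p _; simp
  · intro s _; rw [Fin.cons_self_tail]

lemma cons_lt_iff' {n : ℕ} (a : ℕ) (t : Fin n → ℕ) :
    (∀ i j : Fin (n + 1), i < j → (Fin.cons a t : Fin (n + 1) → ℕ) j < (Fin.cons a t : Fin (n + 1) → ℕ) i) ↔
      ((∀ i j : Fin n, i < j → t j < t i) ∧ ∀ i, t i < a) := by
  constructor
  · intro h
    refine ⟨fun i j hij => ?_, fun i => ?_⟩
    · have := h i.succ j.succ (by simpa using hij)
      simpa using this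
    · have := h 0 i.succ (Fin.succ_pos i)
      simpa using this
  · rintro ⟨h1, h2⟩ i j hij
    induction j using Fin.cases with
    | zero => exact absurd hij (by simp)
    | succ j =>
      induction i using Fin.cases with
      | zero => simpa using h2 j
      | succ i => simpa using h1 i j (by simpa using hij)

lemma cons_le_iff' {n : ℕ} (a : ℕ) (t : Fin n → ℕ) :
    (∀ i j : Fin (n + 1), i ≤ j → (Fin.cons a t : Fin (n + 1) → ℕ) j ≤ (Fin.cons a t : Fin (n + 1) → ℕ) i) ↔
      ((∀ i j : Fin n, i ≤ j → t j ≤ t i) ∧ ∀ i, t i ≤ a) := by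
  constructor
  · intro h
    refine ⟨fun i j hij => ?_, fun i => ?_⟩
    · have := h i.succ j.succ (by simpa using hij)
      simpa using this
    · have := h 0 i.succ (Fin.zero_le _)
      simpa using this
  · rintro ⟨h1, h2⟩ i j hij
    induction j using Fin.cases with
    | zero =>
      have : i = 0 := le_antisymm hij (Fin.zero_le _)
      subst this; exact le_rfl
    | succ j =>
      induction i using Fin.cases with
      | zero => simpa using h2 j
      | succ i => simpa using h1 i j (by simpa using hij)

lemma AW_nil' (q : ℝ) (M : ℕ) : AW q [] M = 1 := by
  haveI h0 : IsEmpty (Fin ([] : List Letter).length) := ⟨fun i => Nat.not_lt_zero _ i.2⟩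
  rw [AW, Finset.filter_true_of_mem (fun s _ i => isEmptyElim i),
    Fintype.piFinset_of_isEmpty, Finset.univ_unique, Finset.sum_singleton]
  simp

lemma AstarW_nil' (q : ℝ) (M : ℕ) : AstarW q [] M = 1 := by
  haveI h0 : IsEmpty (Fin ([] : List Letter).length) := ⟨fun i => Nat.not_lt_zero _ i.2⟩
  rw [AstarW, Finset.filter_true_of_mem (fun s _ i => isEmptyElim i),
    Fintype.piFinset_of_isEmpty, Finset.univ_unique, Finset.sum_singleton]
  simp

lemma AW_cons' (q : ℝ) (u : Letter) (w : List Letter) (M : ℕ) :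
    AW q (u :: w) M = ∑ m ∈ Finset.Ioo 0 M, Jlet q u m * AW q w m := by
  rw [show AW q (u :: w) M = ∑ m ∈ (Fintype.piFinset fun _ : Fin (w.length + 1) =>
        Finset.Ioo 0 M).filter (fun m => ∀ i j : Fin (w.length + 1), i < j → m j < m i),
      ∏ j : Fin (w.length + 1), Jlet q ((u :: w).get j) (m j) from rfl]
  rw [Finset.sum_filter, sum_pi_succ', Finset.sum_product]
  refine Finset.sum_congr rfl fun a ha => ?_
  rw [Finset.mem_Ioo] at ha
  rw [AW, Finset.sum_filter, Finset.mul_sum]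
  rw [← Finset.sum_subset
    (Fintype.piFinset_subset _ _ fun _ => Finset.Ioo_subset_Ioo_right ha.2.le)
    (f := fun t => if (∀ i j : Fin (w.length + 1), i < j →
        Fin.cons a t j < Fin.cons a t i) then
        ∏ j : Fin (w.length + 1), Jlet q ((u :: w).get j) (Fin.cons a t j) else 0)]
  · refine Finset.sum_congr rfl fun t ht => ?_
    simp only [Fintype.mem_piFinset, Finset.mem_Ioo] at ht
    have hcond : (∀ i j : Fin (w.length + 1), i < j →
        (Fin.cons a t : Fin (w.length + 1) → ℕ) j < (Fin.cons a t : Fin (w.length + 1) → ℕ) i)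
        ↔ (∀ i j : Fin w.length, i < j → t j < t i) := by
      rw [cons_lt_iff']
      exact ⟨fun h => h.1, fun h => ⟨h, fun i => (ht i).2⟩⟩
    rw [if_congr hcond rfl rfl, mul_ite, mul_zero]
    refine if_congr Iff.rfl ?_ rfl
    rw [Fin.prod_univ_succ]
    simp [Fin.cons_succ]
  · intro t htM htn
    simp only [Fintype.mem_piFinset, Finset.mem_Ioo] at htM htn
    push_neg at htn
    obtain ⟨i, hi⟩ := htn
    rw [if_neg]
    intro h
    have := (cons_lt_iff' a t).1 h
    exact absurd (this.2 i) (by have := hi ((htM i).1); omega)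

lemma AstarW_cons' (q : ℝ) (u : Letter) (w : List Letter) (M : ℕ) :
    AstarW q (u :: w) M = ∑ m ∈ Finset.Ioo 0 M, Jlet q u m * AstarW q w (m + 1) := by
  rw [show AstarW q (u :: w) M = ∑ m ∈ (Fintype.piFinset fun _ : Fin (w.length + 1) =>
        Finset.Ioo 0 M).filter (fun m => ∀ i j : Fin (w.length + 1), i ≤ j → m j ≤ m i),
      ∏ j : Fin (w.length + 1), Jlet q ((u :: w).get j) (m j) from rfl]
  rw [Finset.sum_filter, sum_pi_succ', Finset.sum_product]
  refine Finset.sum_congr rfl fun a ha => ?_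
  rw [Finset.mem_Ioo] at ha
  rw [AstarW, Finset.sum_filter, Finset.mul_sum]
  rw [← Finset.sum_subset
    (Fintype.piFinset_subset _ _ fun _ => Finset.Ioo_subset_Ioo_right (show a + 1 ≤ M by omega))
    (f := fun t => if (∀ i j : Fin (w.length + 1), i ≤ j →
        Fin.cons a t j ≤ Fin.cons a t i) then
        ∏ j : Fin (w.length + 1), Jlet q ((u :: w).get j) (Fin.cons a t j) else 0)]
  · refine Finset.sum_congr rfl fun t ht => ?_
    simp only [Fintype.mem_piFinset, Finset.mem_Ioo] at ht
    have hcond : (∀ i j : Fin (w.length + 1), i ≤ j →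
        (Fin.cons a t : Fin (w.length + 1) → ℕ) j ≤ (Fin.cons a t : Fin (w.length + 1) → ℕ) i)
        ↔ (∀ i j : Fin w.length, i ≤ j → t j ≤ t i) := by
      rw [cons_le_iff']
      exact ⟨fun h => h.1, fun h => ⟨h, fun i => by have := (ht i).2; omega⟩⟩
    rw [if_congr hcond rfl rfl, mul_ite, mul_zero]
    refine if_congr Iff.rfl ?_ rfl
    rw [Fin.prod_univ_succ]
    simp [Fin.cons_succ]
  · intro t htM htn
    simp only [Fintype.mem_piFinset, Finset.mem_Ioo] at htM htn
    push_neg at htn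
    obtain ⟨i, hi⟩ := htn
    rw [if_neg]
    intro h
    have := (cons_le_iff' a t).1 h
    exact absurd (this.2 i) (by have := hi ((htM i).1); omega)

/-- Recursive form of `AW`. -/
noncomputable def AWr (q : ℝ) : List Letter → ℕ → ℝ
  | [], _ => 1
  | u :: w, M => ∑ m ∈ Finset.Ioo 0 M, Jlet q u m * AWr q w m

/-- Recursive form of `AstarW`. -/
noncomputable def AsR (q : ℝ) : List Letter → ℕ → ℝ
  | [], _ => 1
  | u :: w, M => ∑ m ∈ Finset.Ioo 0 M, Jlet q u m * AsR q w (m + 1)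

lemma AW_eq_AWr (q : ℝ) (w : List Letter) : ∀ M, AW q w M = AWr q w M := by
  induction w with
  | nil => intro M; rw [AW_nil']; rfl
  | cons u w ih =>
    intro M
    rw [AW_cons', AWr]
    exact Finset.sum_congr rfl fun m _ => by rw [ih]

lemma AstarW_eq_AsR (q : ℝ) (w : List Letter) : ∀ M, AstarW q w M = AsR q w M := by
  induction w with
  | nil => intro M; rw [AstarW_nil']; rfl
  | cons u w ih =>
    intro M
    rw [AstarW_cons', AsR]
    exact Finset.sum_congr rfl fun m _ => by rw [ih]

lemma AWr_succ' (q : ℝ) (u : Letter) (w : List Letter) (m : ℕ) :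
    AWr q (u :: w) (m + 1) = AWr q (u :: w) m + Jlet q u m * AWr q w m := by
  rcases Nat.eq_zero_or_pos m with rfl | hm
  · have h1 : Finset.Ioo 0 1 = (∅ : Finset ℕ) := by ext x; simp; omega
    have h0 : Finset.Ioo 0 0 = (∅ : Finset ℕ) := by ext x; simp
    rw [AWr, AWr, h1, h0, Jlet_zero']
    simp
  · have h : Finset.Ioo 0 (m + 1) = insert m (Finset.Ioo 0 m) := by
      ext x; simp only [Finset.mem_Ioo, Finset.mem_insert]; omega
    rw [AWr, AWr, h, Finset.sum_insert (by simp)]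
    ring

/-! ### Linearity lemmas -/

lemma Amap_zero' (q : ℝ) (M : ℕ) : Amap q 0 M = 0 := by
  simp [Amap]

lemma Amap_add' (q : ℝ) (x y : Dfree) (M : ℕ) :
    Amap q (x + y) M = Amap q x M + Amap q y M := by
  unfold Amap
  rw [MonoidAlgebra.coeff_add]
  refine Finsupp.sum_add_index' (fun w => by simp) (fun w a b => by push_cast; ring)

lemma Amap_single' (q : ℝ) (w : FreeMonoid Letter) (a : ℤ) (M : ℕ) :
    Amap q (MonoidAlgebra.single w a) M = (a : ℝ) * AW q (FreeMonoid.toList w) M := by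
  unfold Amap
  exact Finsupp.sum_single_index (by simp)

lemma Astarmap_zero' (q : ℝ) (M : ℕ) : Astarmap q 0 M = 0 := by
  simp [Astarmap]

lemma Astarmap_add' (q : ℝ) (x y : Dfree) (M : ℕ) :
    Astarmap q (x + y) M = Astarmap q x M + Astarmap q y M := by
  unfold Astarmap
  rw [MonoidAlgebra.coeff_add]
  refine Finsupp.sum_add_index' (fun w => by simp) (fun w a b => by push_cast; ring)

lemma Astarmap_single' (q : ℝ) (w : FreeMonoid Letter) (a : ℤ) (M : ℕ) :
    Astarmap q (MonoidAlgebra.single w a) M = (a : ℝ) * AstarW q (FreeMonoid.toList w) M := by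
  unfold Astarmap
  exact Finsupp.sum_single_index (by simp)

lemma toD_zero' : toD 0 = 0 := congrArg MonoidAlgebra.ofCoeff Finsupp.mapDomain_zero

lemma toD_add' (x y : DXi) : toD (x + y) = toD x + toD y := congrArg MonoidAlgebra.ofCoeff Finsupp.mapDomain_add

lemma toD_single' (w : FreeMonoid ℕ+) (a : ℤ) :
    toD (MonoidAlgebra.single w a)
      = MonoidAlgebra.single (FreeMonoid.map Sum.inr w) a := congrArg MonoidAlgebra.ofCoeff Finsupp.mapDomain_single

lemma toD_smul' (a : ℤ) (x : DXi) : toD (a • x) = a • toD x := congrArg MonoidAlgebra.ofCoeff (Finsupp.mapDomain_smul a x.coeff)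

lemma Amap_smul' (q : ℝ) (a : ℤ) (x : Dfree) (M : ℕ) :
    Amap q (a • x) M = (a : ℝ) * Amap q x M := by
  induction x using MonoidAlgebra.induction_linear with
  | zero => rw [smul_zero, Amap_zero', mul_zero]
  | add f g hf hg => rw [smul_add, Amap_add', hf, hg, Amap_add', mul_add]
  | single w b =>
    rw [MonoidAlgebra.smul_single, smul_eq_mul, Amap_single', Amap_single']
    push_cast; ring

/-- `Amap` of the embedding of an element of `𝔡_ξ`. -/
noncomputable def AXf (q : ℝ) (x : DXi) (M : ℕ) : ℝ := Amap q (toD x) M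

lemma AXf_zero (q : ℝ) (M : ℕ) : AXf q 0 M = 0 := by
  rw [AXf, toD_zero', Amap_zero']

lemma AXf_add (q : ℝ) (x y : DXi) (M : ℕ) : AXf q (x + y) M = AXf q x M + AXf q y M := by
  rw [AXf, toD_add', Amap_add']; rfl

lemma AXf_smul (q : ℝ) (a : ℤ) (x : DXi) (M : ℕ) : AXf q (a • x) M = (a : ℝ) * AXf q x M := by
  rw [AXf, toD_smul', Amap_smul']; rfl

lemma AXf_single (q : ℝ) (w : FreeMonoid ℕ+) (a : ℤ) (M : ℕ) :
    AXf q (MonoidAlgebra.single w a) M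
      = (a : ℝ) * AWr q ((FreeMonoid.toList w).map Sum.inr) M := by
  rw [AXf, toD_single', Amap_single', FreeMonoid.toList_map, AW_eq_AWr]

lemma circ_zero' (k : ℕ+) : circ k 0 = 0 := by simp [circ]

lemma circ_add' (k : ℕ+) (x y : DXi) : circ k (x + y) = circ k x + circ k y := by
  unfold circ
  rw [MonoidAlgebra.coeff_add]
  exact Finsupp.sum_add_index' (fun w => by simp) (fun w a b => add_smul a b _)

lemma circ_single' (k : ℕ+) (w : FreeMonoid ℕ+) (a : ℤ) :
    circ k (MonoidAlgebra.single w a) = a • circW k (FreeMonoid.toList w) := by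
  unfold circ
  exact Finsupp.sum_single_index (by simp)

lemma dmap_zero' : dmap 0 = 0 := by simp [dmap]

lemma dmap_add' (x y : DXi) : dmap (x + y) = dmap x + dmap y := by
  unfold dmap
  rw [MonoidAlgebra.coeff_add]
  exact Finsupp.sum_add_index' (fun w => by simp) (fun w a b => add_smul a b _)

lemma dmap_single' (w : FreeMonoid ℕ+) (a : ℤ) :
    dmap (MonoidAlgebra.single w a) = a • dW (FreeMonoid.toList w) := by
  unfold dmap
  exact Finsupp.sum_single_index (by simp)

/-! ### The two key lemmas -/

lemma AXf_xi_mul (q : ℝ) (k : ℕ+) (x : DXi) (M : ℕ) :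
    AXf q (xiX k * x) M = ∑ m ∈ Finset.Ioo 0 M, Jlet q (Sum.inr k) m * AXf q x m := by
  induction x using MonoidAlgebra.induction_linear with
  | zero => simp [AXf_zero]
  | add f g hf hg =>
    rw [mul_add, AXf_add, hf, hg, ← Finset.sum_add_distrib]
    refine Finset.sum_congr rfl fun m _ => ?_
    rw [AXf_add]; ring
  | single w b =>
    rw [show xiX k * MonoidAlgebra.single w b
        = MonoidAlgebra.single (FreeMonoid.of k * w) b by
      rw [xiX, MonoidAlgebra.single_mul_single, one_mul]]
    rw [AXf_single]
    rw [show FreeMonoid.toList (FreeMonoid.of k * w) = k :: FreeMonoid.toList w from rfl]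
    rw [List.map_cons, AWr, Finset.mul_sum]
    refine Finset.sum_congr rfl fun m _ => ?_
    rw [AXf_single]; ring

lemma AXf_circ (q : ℝ) (k : ℕ+) (x : DXi) (M : ℕ) :
    AXf q (circ k x) M
      = ∑ m ∈ Finset.Ioo 0 M, Jlet q (Sum.inr k) m * (AXf q x (m + 1) - AXf q x m) := by
  induction x using MonoidAlgebra.induction_linear with
  | zero => simp [circ_zero', AXf_zero]
  | add f g hf hg =>
    rw [circ_add', AXf_add, hf, hg, ← Finset.sum_add_distrib]
    refine Finset.sum_congr rfl fun m _ => ?_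
    rw [AXf_add, AXf_add]; ring
  | single w b =>
    rw [circ_single']
    cases hw : FreeMonoid.toList w with
    | nil =>
      rw [show circW k [] = 0 from rfl, smul_zero, AXf_zero]
      rw [show w = FreeMonoid.ofList [] from by
        rw [← hw]; exact (FreeMonoid.ofList_toList w).symm]
      refine (Finset.sum_eq_zero fun m _ => ?_).symm
      rw [AXf_single, AXf_single]
      simp [AWr]
    | cons l w' =>
      rw [show circW k (l :: w') = MonoidAlgebra.single (FreeMonoid.ofList ((k + l) :: w')) 1
        from rfl]
      rw [show (b • MonoidAlgebra.single (FreeMonoid.ofList ((k + l) :: w')) 1 : DXi)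
          = MonoidAlgebra.single (FreeMonoid.ofList ((k + l) :: w')) b by
        rw [MonoidAlgebra.smul_single]; norm_num]
      rw [AXf_single]
      rw [show w = FreeMonoid.ofList (l :: w') from by
        rw [← hw]; exact (FreeMonoid.ofList_toList w).symm]
      have htl : ∀ (v : List ℕ+), FreeMonoid.toList (FreeMonoid.ofList v) = v :=
        fun v => FreeMonoid.toList_ofList v
      rw [htl, List.map_cons, AWr, Finset.mul_sum]
      refine Finset.sum_congr rfl fun m hm => ?_
      rw [AXf_single, AXf_single, htl, List.map_cons, AWr_succ', ← Jlet_mul']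
      ring

/-! ### Main word-level lemma -/

lemma main_word (q : ℝ) (v : List ℕ+) :
    ∀ M, AsR q (v.map Sum.inr) M = AXf q (dW v) M := by
  induction v with
  | nil =>
    intro M
    rw [show dW [] = (1 : DXi) from rfl, MonoidAlgebra.one_def, AXf_single]
    simp [AsR, AWr]
  | cons k v ih =>
    intro M
    rw [show dW (k :: v) = xiX k * dW v + circ k (dW v) from rfl]
    rw [AXf_add, AXf_xi_mul, AXf_circ, ← Finset.sum_add_distrib]
    rw [List.map_cons, AsR]
    refine Finset.sum_congr rfl fun m _ => ?_
    rw [ih]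
    ring

end AstarProof

/-- For every `v ∈ 𝔡_ξ` and every integer `M ≥ 1`, `A*_v(M) = A_{d(v)}(M)`. -/
theorem Astar_eq_A_d (q : ℝ) (hq0 : 0 < q) (hq1 : q < 1) (v : DXi) (M : ℕ) (hM : 1 ≤ M) :
    Astarmap q (toD v) M = Amap q (toD (dmap v)) M := by
  induction v using MonoidAlgebra.induction_linear with
  | zero => rw [toD_zero', Astarmap_zero', dmap_zero', toD_zero', Amap_zero']
  | add f g hf hg => rw [toD_add', Astarmap_add', hf, hg, dmap_add', toD_add', Amap_add']
  | single w a =>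
    rw [show toD (MonoidAlgebra.single w a) = _ from toD_single' w a, Astarmap_single',
      FreeMonoid.toList_map, AstarW_eq_AsR, main_word, dmap_single', toD_smul', Amap_smul']
    rfl

end
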